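/- Every graph with fewer than (k-1)! cycles of length congruent to 1 modulo k is k-colorable. -/

import Mathlib

open SimpleGraph
open Fin.NatCast

namespace StmtAux

variable {V : Type*} {G : SimpleGraph V}

lemma memConcat {α : Type*} {a b : α} {l : List α} :
    a ∈ l.concat b ↔ a ∈ l ∨ a = b := by
  simp [List.concat_eq_append]

/-- Two paths with the same endpoints and the same edge sets are equal. -/
theorem pathEq {u : V} : ∀ {s : V} (p q : G.Walk s u), p.IsPath → q.IsPath →
    (∀ e, e ∈ p.edges ↔ e ∈ q.edges) → p = q
  | _, .nil, q, _, hq, h => by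
    have hlen : q.edges.length = 0 := by
      rw [List.length_eq_zero_iff]
      rw [List.eq_nil_iff_forall_not_mem]
      intro e he
      exact (by simpa using (h e).mpr he)
    have : q.length = 0 := by rw [← q.length_edges, hlen]
    cases q with
    | nil => rfl
    | cons h' q' => simp [SimpleGraph.Walk.length_cons] at this
  | s, .cons (v := x) had p', q, hp, hq, h => by
    have hmem : s(s, x) ∈ q.edges := (h _).mp (by simp)
    cases q with
    | nil => simp at hmem
    | @cons _ y _ hb q₂ =>
      rw [SimpleGraph.Walk.edges_cons, List.mem_cons] at hmem
      rw [SimpleGraph.Walk.cons_isPath_iff] at hp hq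
      have hyx : y = x := by
        rcases hmem with heq | hmem2
        · rw [Sym2.eq_iff] at heq
          rcases heq with ⟨-, h2⟩ | ⟨h1, h2⟩
          · exact h2.symm
          · exact absurd h2.symm had.ne
        · exact absurd (SimpleGraph.Walk.fst_mem_support_of_mem_edges q₂ hmem2) hq.2
      subst hyx
      have hedges : ∀ e, e ∈ p'.edges ↔ e ∈ q₂.edges := by
        intro e
        constructor
        · intro he
          have := (h e).mp (by simp [he])
          rw [SimpleGraph.Walk.edges_cons, List.mem_cons] at this
          rcases this with heq | h2
          · subst heq
            exact absurd (SimpleGraph.Walk.fst_mem_support_of_mem_edges p' he) hp.2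
          · exact h2
        · intro he
          have := (h e).mpr (by simp [he])
          rw [SimpleGraph.Walk.edges_cons, List.mem_cons] at this
          rcases this with heq | h2
          · subst heq
            exact absurd (SimpleGraph.Walk.fst_mem_support_of_mem_edges q₂ he) hq.2
          · exact h2
      rw [pathEq p' q₂ hp.1 hq.1 hedges]

/-- Colors advance along a walk whose darts follow the cyclic pattern of `f`. -/
theorem colorSteps {m : ℕ} (f : Equiv.Perm (Fin (m + 1))) (c : V → Fin (m + 1)) :
    ∀ {a b : V} (p : G.Walk a b)
      (_ : ∀ d ∈ p.darts, c d.snd = f (f.symm (c d.fst) + 1))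
      (j : ℕ), j ≤ p.length → c (p.getVert j) = f (f.symm (c a) + (j : Fin (m + 1)))
  | a, _, .nil, hd, j, hj => by
    simp only [SimpleGraph.Walk.length_nil, Nat.le_zero] at hj
    subst hj
    simp
  | a, b, .cons (v := x) ha p, hd, 0, hj => by simp
  | a, b, .cons (v := x) ha p, hd, j + 1, hj => by
    have hx : c x = f (f.symm (c a) + 1) := by
      apply hd ⟨(a, x), ha⟩
      rw [SimpleGraph.Walk.darts_cons]
      exact List.mem_cons_self
    have ih := colorSteps f c p
      (fun d hd' => hd d (by rw [SimpleGraph.Walk.darts_cons]; exact List.mem_cons_of_mem _ hd'))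
      j (by simpa [SimpleGraph.Walk.length_cons] using hj)
    rw [SimpleGraph.Walk.getVert_cons_succ, ih, hx, Equiv.symm_apply_apply]
    congr 1
    push_cast
    abel

theorem subgraphFinite [Finite V] : Finite (G.Subgraph) := by
  classical
  apply Finite.of_injective (fun H : G.Subgraph => (H.verts, { p : V × V | H.Adj p.1 p.2 }))
  intro H1 H2 hEq
  have h1 : H1.verts = H2.verts := congrArg Prod.fst hEq
  have h2 : { p : V × V | H1.Adj p.1 p.2 } = { p : V × V | H2.Adj p.1 p.2 } :=
    congrArg Prod.snd hEq
  ext x y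
  · rw [h1]
  · exact Set.ext_iff.mp h2 (x, y)

/-- Permutations of `Fin (m+1)` fixing `0` correspond to permutations of `Fin m`. -/
def permFixEquiv (m : ℕ) :
    {f : Equiv.Perm (Fin (m + 1)) // f 0 = 0} ≃ Equiv.Perm (Fin m) where
  toFun f := (Equiv.Perm.decomposeFin f.1).2
  invFun σ := ⟨Equiv.Perm.decomposeFin.symm (0, σ),
    Equiv.Perm.decomposeFin_symm_apply_zero 0 σ⟩
  left_inv := by
    rintro ⟨f, hf⟩
    ext1
    simp only
    have h := Equiv.Perm.decomposeFin.symm_apply_apply f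
    have h0 : (Equiv.Perm.decomposeFin f).1 = 0 := by
      have := Equiv.Perm.decomposeFin_symm_apply_zero
        (Equiv.Perm.decomposeFin f).1 (Equiv.Perm.decomposeFin f).2
      rw [← h] at hf
      calc (Equiv.Perm.decomposeFin f).1
          = Equiv.Perm.decomposeFin.symm ((Equiv.Perm.decomposeFin f).1,
              (Equiv.Perm.decomposeFin f).2) 0 := this.symm
        _ = 0 := hf
    conv_rhs => rw [← h]
    rw [← h0]
  right_inv σ := by
    simp

theorem card_permFix (m : ℕ) :
    Nat.card {f : Equiv.Perm (Fin (m + 1)) // f 0 = 0} = Nat.factorial m := by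
  rw [Nat.card_congr (permFixEquiv m), Nat.card_eq_fintype_card, Fintype.card_perm,
    Fintype.card_fin]

end StmtAux

/-- `H` is a cycle subgraph of `G` of length `n`. -/
def SimpleGraph.IsCycleSubgraph {V : Type*} (G : SimpleGraph V) (H : G.Subgraph) (n : ℕ) : Prop :=
  ∃ (v : V) (w : G.Walk v v), w.IsCycle ∧ w.length = n ∧ w.toSubgraph = H

theorem stmt2 {V : Type*} [Fintype V] (G : SimpleGraph V) (k : ℕ) (hk : 2 ≤ k)
    (hfew : {H : G.Subgraph | ∃ n, n % k = 1 ∧ G.IsCycleSubgraph H n}.ncard <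
      Nat.factorial (k - 1)) :
    G.Colorable k := by
  classical
  by_contra hnc
  obtain ⟨m, rfl⟩ : ∃ m, k = m + 1 := ⟨k - 1, by omega⟩
  have hm : 1 ≤ m := by omega
  set T : Set G.Subgraph := {H : G.Subgraph | ∃ n, n % (m + 1) = 1 ∧ G.IsCycleSubgraph H n}
    with hT
  set P : Finset V → Prop :=
    fun W => ∃ c : V → Fin (m + 1), ∀ x ∈ W, ∀ y ∈ W, G.Adj x y → c x ≠ c y with hP
  have hPuniv : ¬ P Finset.univ := by
    rintro ⟨c, hc⟩
    exact hnc ⟨SimpleGraph.Coloring.mk c fun {x y} h =>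
      hc x (Finset.mem_univ x) y (Finset.mem_univ y) h⟩
  obtain ⟨W, hWmem, hWmin⟩ := Finset.exists_min_image
    (Finset.univ.filter fun W : Finset V => ¬ P W) Finset.card
    ⟨Finset.univ, by simp [hPuniv]⟩
  have hW : ¬ P W := (Finset.mem_filter.mp hWmem).2
  have herase : ∀ v ∈ W, P (W.erase v) := by
    intro v hv
    by_contra hcon
    have hmem : W.erase v ∈ Finset.univ.filter fun W : Finset V => ¬ P W :=
      Finset.mem_filter.mpr ⟨Finset.mem_univ _, hcon⟩
    have h1 := hWmin _ hmem
    have h2 := Finset.card_erase_lt_of_mem hv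
    omega
  have hWne : W.Nonempty := by
    rcases Finset.eq_empty_or_nonempty W with rfl | h
    · exact absurd ⟨fun _ => 0, by simp⟩ hW
    · exact h
  obtain ⟨v, hv⟩ := hWne
  obtain ⟨c, hc⟩ := herase v hv
  have hstar : ∀ c' : V → Fin (m + 1),
      (∀ x ∈ W.erase v, ∀ y ∈ W.erase v, G.Adj x y → c' x ≠ c' y) →
      ∀ a : Fin (m + 1), ∃ u ∈ W.erase v, G.Adj v u ∧ c' u = a := by
    intro c' hc' a
    by_contra hcon
    push_neg at hcon
    apply hW
    refine ⟨Function.update c' v a, ?_⟩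
    intro x hx y hy hadj
    by_cases hxv : x = v
    · have hadj' : G.Adj v y := hxv ▸ hadj
      have hyv : y ≠ v := hadj'.ne'
      have hy' : y ∈ W.erase v := Finset.mem_erase.mpr ⟨hyv, hy⟩
      rw [hxv, Function.update_self, Function.update_of_ne hyv]
      exact fun h => (hcon y hy' hadj') h.symm
    · by_cases hyv : y = v
      · have hadj' : G.Adj v x := (hyv ▸ hadj).symm
        have hx' : x ∈ W.erase v := Finset.mem_erase.mpr ⟨hxv, hx⟩
        rw [hyv, Function.update_of_ne hxv, Function.update_self]
        exact hcon x hx' hadj'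
      · rw [Function.update_of_ne hxv, Function.update_of_ne hyv]
        exact hc' x (Finset.mem_erase.mpr ⟨hxv, hx⟩) y (Finset.mem_erase.mpr ⟨hyv, hy⟩) hadj
  -- the key construction, for each permutation fixing 0
  have hkey : ∀ f : Equiv.Perm (Fin (m + 1)), f 0 = 0 →
      ∃ H : G.Subgraph, H ∈ T ∧ ∃ (s u : V) (p : G.Walk s u),
        c s = 0 ∧ c u = f (-1) ∧ p.IsPath ∧ (∀ x ∈ p.support, x ∈ W.erase v) ∧
        (∀ j, j ≤ p.length → c (p.getVert j) = f ((j : Fin (m + 1)))) ∧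
        p.length % (m + 1) = m ∧
        (∀ e, e ∈ H.edgeSet ↔ (e = s(v, s) ∨ e ∈ p.edges ∨ e = s(u, v))) := by
    intro f hf0
    have hfs0 : f.symm 0 = 0 := by rw [Equiv.symm_apply_eq, hf0]
    set π : Fin (m + 1) → Fin (m + 1) := fun x => f (f.symm x + 1) with hπ
    have hπinj : Function.Injective π := by
      intro x y hxy
      have h1 := f.injective hxy
      have h2 := add_right_cancel h1
      exact f.symm.injective h2
    set R : V → V → Prop := fun x y =>
      x ∈ W.erase v ∧ y ∈ W.erase v ∧ G.Adj x y ∧ c y = π (c x) with hR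
    set A : Set V := {u | ∃ s0, (s0 ∈ W.erase v ∧ G.Adj v s0 ∧ c s0 = 0) ∧
      Relation.ReflTransGen R s0 u} with hA
    have hAclosed : ∀ x ∈ A, ∀ y, R x y → y ∈ A := by
      rintro x ⟨s0, hs0, hrtg⟩ y hRxy
      exact ⟨s0, hs0, hrtg.tail hRxy⟩
    set c' : V → Fin (m + 1) := fun u => if u ∈ A then π (c u) else c u with hc'def
    have hc'proper : ∀ x ∈ W.erase v, ∀ y ∈ W.erase v, G.Adj x y → c' x ≠ c' y := by
      intro x hx y hy hadj
      have hne := hc x hx y hy hadj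
      by_cases hxA : x ∈ A
      · by_cases hyA : y ∈ A
        · simp only [hc'def, if_pos hxA, if_pos hyA]
          exact fun h => hne (hπinj h)
        · simp only [hc'def, if_pos hxA, if_neg hyA]
          intro h
          exact hyA (hAclosed x hxA y ⟨hx, hy, hadj, h.symm⟩)
      · by_cases hyA : y ∈ A
        · simp only [hc'def, if_neg hxA, if_pos hyA]
          intro h
          exact hxA (hAclosed y hyA x ⟨hy, hx, hadj.symm, h⟩)
        · simp only [hc'def, if_neg hxA, if_neg hyA]
          exact hne
    obtain ⟨u, hu, hadj_vu, hcu0⟩ := hstar c' hc'proper 0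
    have huA : u ∈ A := by
      by_contra hnA
      have hcu : c u = 0 := by simpa [hc'def, if_neg hnA] using hcu0
      exact hnA ⟨u, ⟨hu, hadj_vu, hcu⟩, Relation.ReflTransGen.refl⟩
    have hπcu : π (c u) = 0 := by simpa [hc'def, if_pos huA] using hcu0
    have hcu : c u = f (-1) := by
      have h1 : f (f.symm (c u) + 1) = f 0 := by rw [hf0]; exact hπcu
      have h2 : f.symm (c u) + 1 = 0 := f.injective h1
      have h3 : f.symm (c u) = -1 := eq_neg_of_add_eq_zero_left h2
      rw [← h3, Equiv.apply_symm_apply]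
    obtain ⟨s, ⟨hs_mem, hadj_vs, hcs⟩, hrtg⟩ := huA
    have hwalk : ∀ u', Relation.ReflTransGen R s u' →
        ∃ p : G.Walk s u', (∀ d ∈ p.darts, c d.snd = π (c d.fst)) ∧
          (∀ x ∈ p.support, x ∈ W.erase v) := by
      intro u' h
      induction h with
      | refl => exact ⟨SimpleGraph.Walk.nil, by simp, by simpa using hs_mem⟩
      | tail hab hRbc ih =>
        obtain ⟨p, hd, hsup⟩ := ih
        refine ⟨p.concat hRbc.2.2.1, ?_, ?_⟩
        · intro d hdm
          rw [SimpleGraph.Walk.darts_concat] at hdm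
          rcases StmtAux.memConcat.mp hdm with h1 | h1
          · exact hd d h1
          · subst h1; exact hRbc.2.2.2
        · intro x hx
          rw [SimpleGraph.Walk.support_concat, ← List.concat_eq_append] at hx
          rcases StmtAux.memConcat.mp hx with h1 | h1
          · exact hsup x h1
          · subst h1; exact hRbc.2.1
    obtain ⟨p0, hd0, hsup0⟩ := hwalk u hrtg
    set p : G.Walk s u := p0.bypass with hpdef
    have hp : p.IsPath := p0.bypass_isPath
    have hd : ∀ d ∈ p.darts, c d.snd = π (c d.fst) :=
      fun d hdm => hd0 d (p0.darts_bypass_subset hdm)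
    have hsup : ∀ x ∈ p.support, x ∈ W.erase v :=
      fun x hx => hsup0 x (p0.support_bypass_subset hx)
    have hcolor : ∀ j, j ≤ p.length → c (p.getVert j) = f ((j : Fin (m + 1))) := by
      intro j hj
      have := StmtAux.colorSteps f c p hd j hj
      rwa [hcs, hfs0, zero_add] at this
    have hulen : c u = f ((p.length : Fin (m + 1))) := by
      have := hcolor p.length le_rfl
      rwa [SimpleGraph.Walk.getVert_length] at this
    have hlmod : p.length % (m + 1) = m := by
      have h1 : ((p.length : Fin (m + 1))) = -1 := f.injective (hulen.symm.trans hcu)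
      have h2 := congrArg Fin.val h1
      rwa [Fin.val_natCast, Fin.coe_neg_one] at h2
    have hsv : s ≠ v := (Finset.mem_erase.mp hs_mem).1
    have huv : u ≠ v := (Finset.mem_erase.mp hu).1
    have hfm1 : f (-1) ≠ 0 := by
      rw [← hf0]
      intro h
      have h1 := f.injective h
      have h2 := congrArg Fin.val h1
      rw [Fin.coe_neg_one] at h2
      simp only [Fin.val_zero] at h2
      omega
    have hsu : s ≠ u := fun h => hfm1 (by rw [← hcu, ← h, hcs])
    have hvns : v ∉ p.support := fun h => (Finset.mem_erase.mp (hsup v h)).1 rfl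
    set q : G.Walk s v := p.concat hadj_vu.symm with hq
    have hqpath : q.IsPath := by
      rw [← SimpleGraph.Walk.isPath_reverse_iff, hq, SimpleGraph.Walk.reverse_concat]
      apply SimpleGraph.Walk.IsPath.cons
      · rwa [SimpleGraph.Walk.isPath_reverse_iff]
      · rwa [SimpleGraph.Walk.support_reverse, List.mem_reverse]
    have hvs_not : s(v, s) ∉ q.edges := by
      rw [hq, SimpleGraph.Walk.edges_concat]
      intro hmem
      rcases StmtAux.memConcat.mp hmem with h1 | h1
      · exact hvns (SimpleGraph.Walk.fst_mem_support_of_mem_edges p h1)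
      · rw [Sym2.eq_iff] at h1
        rcases h1 with ⟨h2, -⟩ | ⟨-, h3⟩
        · exact huv h2.symm
        · exact hsu h3
    set w : G.Walk v v := SimpleGraph.Walk.cons hadj_vs q with hwdef
    have hwcyc : w.IsCycle := (SimpleGraph.Walk.cons_isCycle_iff q hadj_vs).mpr ⟨hqpath, hvs_not⟩
    have hwlen : w.length = p.length + 2 := by
      rw [hwdef, SimpleGraph.Walk.length_cons, hq, SimpleGraph.Walk.length_concat]
    have hmodlen : w.length % (m + 1) = 1 := by
      obtain ⟨t, ht⟩ : ∃ t, p.length = (m + 1) * t + m :=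
        ⟨p.length / (m + 1), by conv_lhs => rw [← Nat.div_add_mod p.length (m + 1), hlmod]⟩
      rw [hwlen, ht]
      have harith : (m + 1) * t + m + 2 = 1 + (t + 1) * (m + 1) := by ring
      rw [harith, Nat.add_mul_mod_self_right]
      exact Nat.mod_eq_of_lt (by omega)
    refine ⟨w.toSubgraph, ⟨w.length, hmodlen, v, w, hwcyc, rfl, rfl⟩,
      s, u, p, hcs, hcu, hp, hsup, hcolor, hlmod, ?_⟩
    intro e
    rw [SimpleGraph.Walk.edgeSet_toSubgraph]
    rw [SimpleGraph.Walk.mem_edgeSet]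
    rw [hwdef, SimpleGraph.Walk.edges_cons, hq, SimpleGraph.Walk.edges_concat, List.mem_cons]
    constructor
    · rintro (h1 | h1)
      · exact Or.inl h1
      · rcases StmtAux.memConcat.mp h1 with h2 | h2
        · exact Or.inr (Or.inl h2)
        · exact Or.inr (Or.inr h2)
    · rintro (h1 | h1 | h1)
      · exact Or.inl h1
      · exact Or.inr (StmtAux.memConcat.mpr (Or.inl h1))
      · exact Or.inr (StmtAux.memConcat.mpr (Or.inr h1))
  -- choose the subgraphs
  let F : {f : Equiv.Perm (Fin (m + 1)) // f 0 = 0} → G.Subgraph :=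
    fun f => (hkey f.1 f.2).choose
  have hFspec : ∀ f : {f : Equiv.Perm (Fin (m + 1)) // f 0 = 0},
      F f ∈ T ∧ ∃ (s u : V) (p : G.Walk s u),
        c s = 0 ∧ c u = f.1 (-1) ∧ p.IsPath ∧ (∀ x ∈ p.support, x ∈ W.erase v) ∧
        (∀ j, j ≤ p.length → c (p.getVert j) = f.1 ((j : Fin (m + 1)))) ∧
        p.length % (m + 1) = m ∧
        (∀ e, e ∈ (F f).edgeSet ↔ (e = s(v, s) ∨ e ∈ p.edges ∨ e = s(u, v))) :=
    fun f => (hkey f.1 f.2).choose_spec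
  have hfneg : ∀ f : {f : Equiv.Perm (Fin (m + 1)) // f 0 = 0}, f.1 (-1) ≠ 0 := by
    intro f h
    have h1 := f.1.injective (h.trans f.2.symm)
    have h2 := congrArg Fin.val h1
    rw [Fin.coe_neg_one] at h2
    simp only [Fin.val_zero] at h2
    omega
  have hFinj : Function.Injective F := by
    rintro f g hFeq
    obtain ⟨-, s₁, u₁, p₁, hcs₁, hcu₁, hp₁, hsup₁, hcol₁, hlen₁, hedge₁⟩ := hFspec f
    obtain ⟨-, s₂, u₂, p₂, hcs₂, hcu₂, hp₂, hsup₂, hcol₂, hlen₂, hedge₂⟩ := hFspec g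
    have hE : ∀ e, (e = s(v, s₁) ∨ e ∈ p₁.edges ∨ e = s(u₁, v)) ↔
        (e = s(v, s₂) ∨ e ∈ p₂.edges ∨ e = s(u₂, v)) := by
      intro e
      rw [← hedge₁ e, hFeq, hedge₂ e]
    have hv₁ : ∀ x ∈ p₁.support, x ≠ v := fun x hx => (Finset.mem_erase.mp (hsup₁ x hx)).1
    have hv₂ : ∀ x ∈ p₂.support, x ≠ v := fun x hx => (Finset.mem_erase.mp (hsup₂ x hx)).1
    have hu₂v : u₂ ≠ v := hv₂ u₂ p₂.end_mem_support
    have hu₁v : u₁ ≠ v := hv₁ u₁ p₁.end_mem_support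
    have hcu₂0 : c u₂ ≠ 0 := by rw [hcu₂]; exact hfneg g
    have hcu₁0 : c u₁ ≠ 0 := by rw [hcu₁]; exact hfneg f
    have hss : s₁ = s₂ := by
      rcases (hE s(v, s₁)).mp (Or.inl rfl) with h2 | h2 | h2
      · exact Sym2.congr_right.mp h2
      · exact absurd (SimpleGraph.Walk.fst_mem_support_of_mem_edges p₂ h2)
          (fun hmem => hv₂ v hmem rfl)
      · rw [Sym2.eq_iff] at h2
        rcases h2 with ⟨h3, -⟩ | ⟨-, h4⟩
        · exact absurd h3.symm hu₂v
        · exact absurd (by rw [← h4, hcs₁]) (Ne.symm hcu₂0)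
    have huu : u₁ = u₂ := by
      rcases (hE s(u₁, v)).mp (Or.inr (Or.inr rfl)) with h2 | h2 | h2
      · rw [Sym2.eq_iff] at h2
        rcases h2 with ⟨h3, -⟩ | ⟨h4, -⟩
        · exact absurd h3 hu₁v
        · exact absurd (by rw [h4, hcs₂]) hcu₁0
      · exact absurd (SimpleGraph.Walk.snd_mem_support_of_mem_edges p₂ h2)
          (fun hmem => hv₂ v hmem rfl)
      · rw [Sym2.eq_iff] at h2
        rcases h2 with ⟨h3, -⟩ | ⟨h3, h4⟩
        · exact h3
        · exact absurd h3 hu₁v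
    subst hss
    subst huu
    have hpe : ∀ e, e ∈ p₁.edges ↔ e ∈ p₂.edges := by
      intro e
      constructor
      · intro he
        rcases (hE e).mp (Or.inr (Or.inl he)) with h2 | h2 | h2
        · subst h2
          exact absurd (SimpleGraph.Walk.fst_mem_support_of_mem_edges p₁ he)
            (fun hmem => hv₁ v hmem rfl)
        · exact h2
        · subst h2
          exact absurd (SimpleGraph.Walk.snd_mem_support_of_mem_edges p₁ he)
            (fun hmem => hv₁ v hmem rfl)
      · intro he
        rcases (hE e).mpr (Or.inr (Or.inl he)) with h2 | h2 | h2
        · subst h2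
          exact absurd (SimpleGraph.Walk.fst_mem_support_of_mem_edges p₂ he)
            (fun hmem => hv₂ v hmem rfl)
        · exact h2
        · subst h2
          exact absurd (SimpleGraph.Walk.snd_mem_support_of_mem_edges p₂ he)
            (fun hmem => hv₂ v hmem rfl)
    have hpp : p₁ = p₂ := StmtAux.pathEq p₁ p₂ hp₁ hp₂ hpe
    subst hpp
    have hmle : m ≤ p₁.length := by
      conv_lhs => rw [← hlen₁]
      exact Nat.mod_le _ _
    have hfg : f.1 = g.1 := by
      apply Equiv.ext
      intro x
      have hxle : x.val ≤ p₁.length := le_trans (Nat.lt_succ_iff.mp x.isLt) hmle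
      have h1 := hcol₁ x.val hxle
      have h2 := hcol₂ x.val hxle
      have h3 : f.1 ((x.val : Fin (m + 1))) = g.1 ((x.val : Fin (m + 1))) := by
        rw [← h1, h2]
      rwa [Fin.cast_val_eq_self] at h3
    exact Subtype.ext hfg
  have hTfin : T.Finite := by
    have : Finite G.Subgraph := StmtAux.subgraphFinite
    exact Set.toFinite T
  have hrange : Set.range F ⊆ T := by
    rintro H ⟨f, rfl⟩
    exact (hFspec f).1
  have hcard : Nat.factorial m ≤ T.ncard := by
    calc Nat.factorial m
        = Nat.card {f : Equiv.Perm (Fin (m + 1)) // f 0 = 0} := (StmtAux.card_permFix m).symm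
      _ = Nat.card (Set.range F) := Nat.card_congr (Equiv.ofInjective F hFinj)
      _ = (Set.range F).ncard := (Nat.card_coe_set_eq _)
      _ ≤ T.ncard := Set.ncard_le_ncard hrange hTfin
  rw [Nat.add_sub_cancel] at hfew
  omega
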